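/- Let ℓ, k be null vectors with g(k,ℓ) = -1, let y be a vector orthogonal to both ℓ and k, and let Ξ be a nonzero real number. Define the endomorphism L of V* by L(ω)_β = -k^α ω_α ℓ_β - (1/2) g(y,y) ℓ^α ω_α ℓ_β - Ξ² ℓ^α ω_α k_β + Ξ (P ω)_β - Ξ ℓ^α ω_α y_β + y^α ω_α ℓ_β (in index form, L_β^α = -k^α ℓ_β - (1/2)(y·y) ℓ^α ℓ_β - Ξ² ℓ^α k_β + Ξ P^α_β - Ξ ℓ^α y_β + y^α ℓ_β). Then L is invertible, with determinant Ξ⁴. -/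

import Mathlib

set_option maxRecDepth 8000
set_option maxHeartbeats 1000000



/-- With `ℓ, k` null, `g k ℓ = -1`, `y` orthogonal to `ℓ` and `k`, and
`Ξ ≠ 0`, the endomorphism of `V*` given (in index form) by
`L_β^α = -k^α ℓ_β - (1/2)(y·y) ℓ^α ℓ_β - Ξ² ℓ^α k_β + Ξ P^α_β - Ξ ℓ^α y_β + y^α ℓ_β`
(where `P^α_β = δ^α_β + k^α ℓ_β + ℓ^α k_β`) is invertible, with determinant `Ξ⁴`. -/
theorem operatorL_invertible_det
    (V : Type*) [AddCommGroup V] [Module ℝ V]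
    (g : LinearMap.BilinForm ℝ V) (hsymm : g.IsSymm)
    (b : Module.Basis (Fin 4) ℝ V)
    (hb : ∀ i j, g (b i) (b j) = if i = j then (if i = 0 then (-1 : ℝ) else 1) else 0)
    (ℓ k y : V) (Ξ : ℝ)
    (hℓnull : g ℓ ℓ = 0) (hknull : g k k = 0) (hkℓ : g k ℓ = -1)
    (hyℓ : g y ℓ = 0) (hyk : g y k = 0)
    (hΞ : Ξ ≠ 0)
    (L : Module.Dual ℝ V →ₗ[ℝ] Module.Dual ℝ V)
    (hL : ∀ ω : Module.Dual ℝ V,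
      L ω = (-(ω k)) • g ℓ + (-(1/2 * g y y * ω ℓ)) • g ℓ + (-(Ξ^2 * ω ℓ)) • g k
        + Ξ • (ω + (ω k) • g ℓ + (ω ℓ) • g k) + (-(Ξ * ω ℓ)) • g y + (ω y) • g ℓ) :
    LinearMap.det L = Ξ^4 ∧ Function.Bijective L := by
  classical
  have gsym : ∀ v w : V, g v w = g w v := fun v w => by simpa using hsymm.eq v w
  have hℓk : g ℓ k = -1 := by rw [gsym]; exact hkℓ
  have hℓy : g ℓ y = 0 := by rw [gsym]; exact hyℓ
  have hky : g k y = 0 := by rw [gsym]; exact hyk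
  set s : ℝ := g y y with hs
  set B := b.dualBasis with hB
  set u : Fin 3 → V := ![ℓ, k, y] with hu
  set v : Fin 3 → V := ![(Ξ - 1) • k - (s/2) • ℓ + y, (Ξ - Ξ^2) • ℓ, (-Ξ) • ℓ] with hv
  set U : Matrix (Fin 4) (Fin 3) ℝ := fun i m => g (u m) (b i) with hU
  set W : Matrix (Fin 3) (Fin 4) ℝ := fun m j => b.repr (v m) j with hW
  set A := LinearMap.toMatrix B B L with hA
  -- entries of A
  have hAeq : A = Ξ • (1 : Matrix (Fin 4) (Fin 4) ℝ) + U * W := by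
    ext i j
    have hAij : A i j = (L (B j)) (b i) := by
      rw [hA, LinearMap.toMatrix_apply, hB, Module.Basis.dualBasis_repr]
    rw [hAij, hL]
    have hBj : ∀ z : V, (B j) z = b.repr z j := fun z => b.dualBasis_apply j z
    simp only [Matrix.add_apply, Matrix.smul_apply, Matrix.mul_apply, Matrix.one_apply,
      LinearMap.add_apply, LinearMap.smul_apply, smul_eq_mul]
    rw [Fin.sum_univ_three]
    simp only [hU, hW, hu, hv, Matrix.cons_val_zero, Matrix.cons_val_one, Matrix.head_cons,
      Matrix.cons_val_two, Matrix.tail_cons]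
    simp only [map_add, map_sub, map_smul, hBj, smul_eq_mul, Finsupp.coe_add, Finsupp.coe_sub,
      Finsupp.coe_smul, Pi.add_apply, Pi.sub_apply, Pi.smul_apply, Module.Basis.repr_self,
      Finsupp.single_apply]
    rcases eq_or_ne i j with hij | hij
    · subst hij; simp only [if_pos rfl]; ring
    · simp only [if_neg hij]; ring
  -- the 3×3 matrix W * U
  have hWU : ∀ m n, (W * U) m n = g (u n) (v m) := by
    intro m n
    rw [Matrix.mul_apply]
    conv_rhs => rw [← b.sum_repr (v m)]
    rw [map_sum]
    apply Finset.sum_congr rfl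
    intro j _
    rw [map_smul, hW, hU, smul_eq_mul]
  -- determinant computation
  have hdetA : A.det = Ξ^4 := by
    have hfact : A = Ξ • ((1 : Matrix (Fin 4) (Fin 4) ℝ) + (Ξ⁻¹ • U) * W) := by
      rw [hAeq, smul_add, Matrix.smul_mul, smul_smul, mul_inv_cancel₀ hΞ, one_smul]
    rw [hfact, Matrix.det_smul, Matrix.det_one_add_mul_comm, Matrix.mul_smul]
    have h00 := hWU 0 0
    have h01 := hWU 0 1
    have h02 := hWU 0 2
    have h10 := hWU 1 0
    have h11 := hWU 1 1
    have h12 := hWU 1 2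
    have h20 := hWU 2 0
    have h21 := hWU 2 1
    have h22 := hWU 2 2
    simp only [hu, hv, Matrix.cons_val_zero, Matrix.cons_val_one, Matrix.head_cons,
      Matrix.cons_val_two, Matrix.tail_cons, map_add, map_sub, map_smul, smul_eq_mul,
      hℓnull, hknull, hkℓ, hℓk, hℓy, hky, hyℓ, hyk, ← hs] at h00 h01 h02 h10 h11 h12 h20 h21 h22
    rw [Matrix.det_fin_three]
    simp only [Matrix.add_apply, Matrix.smul_apply, Matrix.one_apply, smul_eq_mul,
      h00, h01, h02, h10, h11, h12, h20, h21, h22]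
    norm_num [show (1:Fin 3) ≠ 2 by decide, show (2:Fin 3) ≠ 1 by decide,
      show (2:Fin 3) ≠ 0 by decide, show (0:Fin 3) ≠ 2 by decide]
    field_simp
    ring
  have hdetL : LinearMap.det L = Ξ^4 := by
    rw [← LinearMap.det_toMatrix B L, ← hA, hdetA]
  refine ⟨hdetL, ?_⟩
  have hUnit : IsUnit (LinearMap.toMatrix B B L).det := by
    rw [← hA, hdetA]; exact (pow_ne_zero 4 hΞ).isUnit
  have hbij : Function.Bijective
      (⇑((LinearEquiv.ofIsUnitDet hUnit : Module.Dual ℝ V ≃ₗ[ℝ] Module.Dual ℝ V))) :=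
    (LinearEquiv.ofIsUnitDet hUnit).bijective
  have hco : (((LinearEquiv.ofIsUnitDet hUnit) : Module.Dual ℝ V →ₗ[ℝ] Module.Dual ℝ V) :
      Module.Dual ℝ V → Module.Dual ℝ V) = ⇑L := by
    rw [LinearEquiv.coe_ofIsUnitDet hUnit]
  rwa [← hco]
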